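/- For any word v of length n−1 over {\\, /}, among the complete binary trees with interior canopy v there is a unique one, T̄max(v), admitting no valid right rotation, and a unique one, T̄min(v), admitting no valid left rotation; and every complete binary tree T̄ with interior canopy v satisfies T̄min(v) ≤ T̄ ≤ T̄max(v) in the Tamari lattice. -/

import Mathlib

/-- Complete binary trees: every vertex has 0 or 2 children
(`leaf` = external vertex, `node` = internal vertex). -/
inductive CTree where
  | leaf : CTree
  | node : CTree → CTree → CTree
deriving DecidableEq

/-- The number of internal vertices of a complete binary tree. -/
def isize : CTree → ℕ
  | .leaf => 0
  | .node l r => isize l + isize r + 1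

/-- The sequence of external edges of a complete binary tree, recorded walking clockwise
around it starting at the root: `false` = left external edge (`\`), `true` = right
external edge (`/`). -/
def extSeq : CTree → List Bool
  | .leaf => []
  | .node l r =>
      (if l = CTree.leaf then [false] else extSeq l) ++
      (if r = CTree.leaf then [true] else extSeq r)

/-- The word `c(T̄)` over `{\, /}`: the external edges of `T̄` in clockwise order,
omitting the first and the last ones (`false` = `\`, `true` = `/`). -/
def cword (t : CTree) : List Bool := ((extSeq t).drop 1).dropLast

/-- One-hole contexts, locating a vertex in a complete binary tree. -/
inductive Ctx where
  | hole : Ctx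
  | left : Ctx → CTree → Ctx
  | right : CTree → Ctx → Ctx

/-- Fill the hole of a context with a tree. -/
def Ctx.fill : Ctx → CTree → CTree
  | .hole, t => t
  | .left c r, t => CTree.node (c.fill t) r
  | .right l c, t => CTree.node l (c.fill t)

/-- Right rotation at some internal vertex `s` whose left child `t` is internal, with
`A`, `B` the left and right subtrees of `t` and `C` the right subtree of `s`: after the
rotation, `t` becomes the right child of `s`, `A` the left subtree of `s`, and `B`, `C`
the left and right subtrees of `t`. -/
def RotStep (T T' : CTree) : Prop :=
  ∃ (K : Ctx) (A B C : CTree),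
    T = K.fill (CTree.node (CTree.node A B) C) ∧
    T' = K.fill (CTree.node A (CTree.node B C))

/-- The Tamari order on complete binary trees: the reflexive-transitive closure of the
right-rotation covering relation. -/
def TamariLe : CTree → CTree → Prop := Relation.ReflTransGen RotStep

/-- A valid right rotation: a right rotation whose subtree `B` has more than one vertex
(i.e. `B` is not a single external vertex); these are exactly the rotations preserving
the interior canopy.  `ValidRot T T'` means `T'` is obtained from `T` by a valid right
rotation; equivalently, `T` is obtained from `T'` by a valid left rotation. -/
def ValidRot (T T' : CTree) : Prop :=
  ∃ (K : Ctx) (A B C : CTree), B ≠ CTree.leaf ∧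
    T = K.fill (CTree.node (CTree.node A B) C) ∧
    T' = K.fill (CTree.node A (CTree.node B C))

section TamariAux

open CTree Relation

/-! ### Basic facts about `extSeq`, `cword`, `isize` -/

lemma extSeq_form : ∀ t : CTree, t ≠ .leaf → ∃ w, extSeq t = false :: w ++ [true] := by
  intro t
  induction t with
  | leaf => simp
  | node l r ihl ihr =>
    intro _
    have hL : ∃ a, (if l = CTree.leaf then [false] else extSeq l) = false :: a := by
      by_cases hl : l = .leaf
      · exact ⟨[], by simp [hl]⟩
      · obtain ⟨w, hw⟩ := ihl hl
        exact ⟨w ++ [true], by simp [hl, hw]⟩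
    have hR : ∃ b, (if r = CTree.leaf then [true] else extSeq r) = b ++ [true] := by
      by_cases hr : r = .leaf
      · exact ⟨[], by simp [hr]⟩
      · obtain ⟨w, hw⟩ := ihr hr
        exact ⟨false :: w, by simp [hr, hw]⟩
    obtain ⟨a, ha⟩ := hL
    obtain ⟨b, hb⟩ := hR
    exact ⟨a ++ b, by simp [extSeq, ha, hb]⟩

lemma extSeq_shape (t : CTree) (h : t ≠ .leaf) : extSeq t = false :: cword t ++ [true] := by
  obtain ⟨w, hw⟩ := extSeq_form t h
  have hc : cword t = w := by
    simp [cword, hw, List.dropLast_concat]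
  rw [hw, hc]

lemma extSeq_length : ∀ t : CTree, t ≠ .leaf → (extSeq t).length = isize t + 1 := by
  intro t
  induction t with
  | leaf => simp
  | node l r ihl ihr =>
    intro _
    have hL : (if l = CTree.leaf then [false] else extSeq l).length = isize l + 1 := by
      by_cases hl : l = .leaf
      · simp [hl, isize]
      · simp [hl, ihl hl]
    have hR : (if r = CTree.leaf then [true] else extSeq r).length = isize r + 1 := by
      by_cases hr : r = .leaf
      · simp [hr, isize]
      · simp [hr, ihr hr]
    simp [extSeq, hL, hR, isize]
    omega

lemma isize_pos_ne_leaf {t : CTree} (h : 0 < isize t) : t ≠ .leaf := by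
  intro h'; subst h'; simp [isize] at h

lemma extSeq_eq_of_cword_eq {t t' : CTree} (ht : t ≠ .leaf) (ht' : t' ≠ .leaf)
    (h : cword t = cword t') : extSeq t = extSeq t' := by
  rw [extSeq_shape t ht, extSeq_shape t' ht', h]

/-! ### Contexts -/

lemma fill_ne_leaf : ∀ (K : Ctx) {t : CTree}, t ≠ .leaf → K.fill t ≠ .leaf := by
  intro K t ht
  cases K <;> simp [Ctx.fill] <;> assumption

lemma isize_fill : ∀ (K : Ctx) {t t' : CTree}, isize t = isize t' →
    isize (K.fill t) = isize (K.fill t') := by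
  intro K
  induction K with
  | hole => intro t t' h; exact h
  | left c r ih => intro t t' h; simp [Ctx.fill, isize, ih h]
  | right l c ih => intro t t' h; simp [Ctx.fill, isize, ih h]

lemma extSeq_fill : ∀ (K : Ctx) {t t' : CTree}, t ≠ .leaf → t' ≠ .leaf →
    extSeq t = extSeq t' → extSeq (K.fill t) = extSeq (K.fill t') := by
  intro K
  induction K with
  | hole => intro t t' _ _ h; exact h
  | left c r ih =>
    intro t t' ht ht' h
    simp [Ctx.fill, extSeq, fill_ne_leaf c ht, fill_ne_leaf c ht', ih ht ht' h]
  | right l c ih =>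
    intro t t' ht ht' h
    simp [Ctx.fill, extSeq, fill_ne_leaf c ht, fill_ne_leaf c ht', ih ht ht' h]


/-! ### The measure `mu`, increasing under valid rotations -/

def mu : CTree → ℕ
  | .leaf => 0
  | .node l r => mu l + mu r + isize r

lemma mu_le_sq : ∀ t : CTree, mu t ≤ isize t * isize t := by
  intro t
  induction t with
  | leaf => simp [mu, isize]
  | node l r ihl ihr =>
    simp only [mu, isize]
    nlinarith [ihl, ihr]

lemma mu_fill_lt : ∀ (K : Ctx) {t t' : CTree}, isize t = isize t' →
    mu t < mu t' → mu (K.fill t) < mu (K.fill t') := by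
  intro K
  induction K with
  | hole => intro t t' _ h; exact h
  | left c r ih =>
    intro t t' hi h
    simp only [Ctx.fill, mu]
    have := ih hi h
    omega
  | right l c ih =>
    intro t t' hi h
    have h2 := isize_fill c hi
    simp only [Ctx.fill, mu]
    have := ih hi h
    omega

lemma validRot_facts {T T' : CTree} (h : ValidRot T T') :
    mu T < mu T' ∧ isize T = isize T' ∧ extSeq T = extSeq T' ∧ T ≠ .leaf := by
  obtain ⟨K, A, B, C, hB, h1, h2⟩ := h
  subst h1; subst h2
  have hiz : isize (CTree.node (CTree.node A B) C) = isize (CTree.node A (CTree.node B C)) := by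
    simp [isize]; omega
  have hmu : mu (CTree.node (CTree.node A B) C) < mu (CTree.node A (CTree.node B C)) := by
    simp [mu, isize]; omega
  have hnl : (CTree.node (CTree.node A B) C) ≠ CTree.leaf := by simp
  have hnl' : (CTree.node A (CTree.node B C)) ≠ CTree.leaf := by simp
  have hext : extSeq (CTree.node (CTree.node A B) C) = extSeq (CTree.node A (CTree.node B C)) := by
    simp [extSeq, hB]
  exact ⟨mu_fill_lt K hiz hmu, isize_fill K hiz, extSeq_fill K hnl hnl' hext,
    fill_ne_leaf K hnl⟩

lemma to_max_aux : ∀ (N : ℕ) (T : CTree), isize T * isize T - mu T < N →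
    ∃ Tm, Relation.ReflTransGen ValidRot T Tm ∧ ∀ T', ¬ ValidRot Tm T' := by
  intro N
  induction N with
  | zero => intro T h; omega
  | succ N ih =>
    intro T hT
    by_cases h : ∃ T', ValidRot T T'
    · obtain ⟨T', hstep⟩ := h
      obtain ⟨hmu, hiz, _, _⟩ := validRot_facts hstep
      have hb := mu_le_sq T'
      have hmeas : isize T' * isize T' - mu T' < N := by
        rw [← hiz] at hb ⊢
        omega
      obtain ⟨Tm, hchain, hmax⟩ := ih T' hmeas
      exact ⟨Tm, Relation.ReflTransGen.head hstep hchain, hmax⟩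
    · push_neg at h
      exact ⟨T, Relation.ReflTransGen.refl, h⟩

lemma to_max (T : CTree) :
    ∃ Tm, Relation.ReflTransGen ValidRot T Tm ∧ ∀ T', ¬ ValidRot Tm T' :=
  to_max_aux (isize T * isize T - mu T + 1) T (by omega)

lemma chain_pres {T Tm : CTree} (h : Relation.ReflTransGen ValidRot T Tm) :
    extSeq Tm = extSeq T ∧ isize Tm = isize T := by
  induction h with
  | refl => exact ⟨rfl, rfl⟩
  | tail _ hstep ih =>
    obtain ⟨_, hiz, hext, _⟩ := validRot_facts hstep
    exact ⟨hext ▸ ih.1, hiz ▸ ih.2⟩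


/-! ### Trees admitting no valid right rotation -/

def recNoR : CTree → Prop
  | .leaf => True
  | .node l r => recNoR l ∧ recNoR r ∧ ∀ A B, l = CTree.node A B → B = CTree.leaf

lemma recNoR_of_noRot : ∀ T : CTree, (∀ T', ¬ ValidRot T T') → recNoR T := by
  intro T
  induction T with
  | leaf => intro _; trivial
  | node l r ihl ihr =>
    intro h
    refine ⟨ihl ?_, ihr ?_, ?_⟩
    · rintro T' ⟨K, A, B, C, hB, h1, h2⟩
      exact h (CTree.node T' r)
        ⟨Ctx.left K r, A, B, C, hB, by simp [Ctx.fill, h1], by simp [Ctx.fill, h2]⟩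
    · rintro T' ⟨K, A, B, C, hB, h1, h2⟩
      exact h (CTree.node l T')
        ⟨Ctx.right l K, A, B, C, hB, by simp [Ctx.fill, h1], by simp [Ctx.fill, h2]⟩
    · intro A B hAB
      by_contra hB
      exact h (CTree.node A (CTree.node B r))
        ⟨Ctx.hole, A, B, r, hB, by simp [Ctx.fill, hAB], rfl⟩

lemma noRot_of_recNoR_aux : ∀ (K : Ctx) (A B C : CTree), B ≠ .leaf →
    ¬ recNoR (K.fill (CTree.node (CTree.node A B) C)) := by
  intro K
  induction K with
  | hole => intro A B C hB h; exact hB (h.2.2 A B rfl)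
  | left c r ih => intro A B C hB h; exact ih A B C hB h.1
  | right l c ih => intro A B C hB h; exact ih A B C hB h.2.1

lemma noRot_of_recNoR {T : CTree} (h : recNoR T) : ∀ T', ¬ ValidRot T T' := by
  rintro T' ⟨K, A, B, C, hB, h1, h2⟩
  exact noRot_of_recNoR_aux K A B C hB (h1 ▸ h)

/-! ### Combs and canonical maximal trees -/

def comb : ℕ → CTree
  | 0 => .leaf
  | k + 1 => .node (comb k) .leaf

def tmaxL : List ℕ → CTree
  | [] => .leaf
  | k :: ks => .node (comb k) (tmaxL ks)

def g : List ℕ → List Bool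
  | [] => [true]
  | k :: ks => false :: (List.replicate k true ++ g ks)

lemma comb_shape (k : ℕ) : ∀ A B, comb k = CTree.node A B → B = CTree.leaf := by
  cases k with
  | zero => intro A B h; simp [comb] at h
  | succ k => intro A B h; simp [comb] at h; exact h.2.symm

lemma recNoR_comb : ∀ k, recNoR (comb k) := by
  intro k
  induction k with
  | zero => trivial
  | succ k ih => exact ⟨ih, trivial, comb_shape k⟩

lemma recNoR_tmaxL : ∀ ks, recNoR (tmaxL ks) := by
  intro ks
  induction ks with
  | nil => trivial
  | cons k ks ih => exact ⟨recNoR_comb k, ih, comb_shape k⟩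

lemma comb_of : ∀ t : CTree, recNoR t → (∀ A B, t = CTree.node A B → B = CTree.leaf) →
    ∃ k, t = comb k := by
  intro t
  induction t with
  | leaf => intro _ _; exact ⟨0, rfl⟩
  | node A B ihA _ =>
    intro h h2
    have hB : B = CTree.leaf := h2 A B rfl
    obtain ⟨k, hk⟩ := ihA h.1 h.2.2
    exact ⟨k + 1, by rw [hB, hk]; rfl⟩

lemma tmaxL_of : ∀ T : CTree, recNoR T → ∃ ks, T = tmaxL ks := by
  intro T
  induction T with
  | leaf => intro _; exact ⟨[], rfl⟩
  | node l r _ ihr =>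
    intro h
    obtain ⟨k, hk⟩ := comb_of l h.1 h.2.2
    obtain ⟨ks, hks⟩ := ihr h.2.1
    exact ⟨k :: ks, by rw [hk, hks]; rfl⟩

lemma tmaxL_eq_leaf : ∀ ks, tmaxL ks = CTree.leaf ↔ ks = [] := by
  intro ks
  cases ks <;> simp [tmaxL]

lemma Lpart_comb : ∀ k, (if comb k = CTree.leaf then [false] else extSeq (comb k)) =
    false :: List.replicate k true := by
  intro k
  induction k with
  | zero => simp [comb]
  | succ k ih =>
    have : comb (k + 1) ≠ CTree.leaf := by simp [comb]
    simp only [this, if_neg]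
    show extSeq (CTree.node (comb k) CTree.leaf) = _
    simp [extSeq, ih, List.replicate_succ']

lemma g_tmaxL : ∀ ks, (if tmaxL ks = CTree.leaf then [true] else extSeq (tmaxL ks)) = g ks := by
  intro ks
  induction ks with
  | nil => simp [tmaxL, g]
  | cons k ks ih =>
    have hnl : tmaxL (k :: ks) ≠ CTree.leaf := by simp [tmaxL]
    simp only [hnl, if_neg]
    show extSeq (CTree.node (comb k) (tmaxL ks)) = _
    simp [extSeq, Lpart_comb, ih, g]

lemma extSeq_tmaxL {ks : List ℕ} (h : ks ≠ []) : extSeq (tmaxL ks) = g ks := by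
  have := g_tmaxL ks
  rwa [if_neg (by rw [tmaxL_eq_leaf]; exact h)] at this

lemma g_ne_nil : ∀ ks, g ks ≠ [] := by
  intro ks; cases ks <;> simp [g]

lemma rep_g_inj : ∀ (k k' : ℕ) (ks ks' : List ℕ),
    List.replicate k true ++ g ks = List.replicate k' true ++ g ks' →
    k = k' ∧ g ks = g ks' := by
  intro k
  induction k with
  | zero =>
    intro k' ks ks' h
    cases k' with
    | zero => exact ⟨rfl, h⟩
    | succ k' =>
      exfalso
      cases ks with
      | nil =>
        have hpos : 0 < (g ks').length := List.length_pos_iff.mpr (g_ne_nil ks')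
        have hl := congrArg List.length h
        simp [g] at hl
        omega
      | cons a b => simp [g, List.replicate_succ] at h
  | succ k ih =>
    intro k' ks ks' h
    cases k' with
    | zero =>
      exfalso
      cases ks' with
      | nil =>
        have hpos : 0 < (g ks).length := List.length_pos_iff.mpr (g_ne_nil ks)
        have hl := congrArg List.length h
        simp [g] at hl
        omega
      | cons a b => simp [g, List.replicate_succ] at h
    | succ k' =>
      simp only [List.replicate, List.cons_append, List.cons.injEq] at h
      obtain ⟨h1, h2⟩ := ih k' ks ks' h.2
      exact ⟨by omega, h2⟩

lemma g_inj : ∀ ks ks', g ks = g ks' → ks = ks' := by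
  intro ks
  induction ks with
  | nil =>
    intro ks' h
    cases ks' with
    | nil => rfl
    | cons k' l' => simp [g] at h
  | cons k ks ih =>
    intro ks' h
    cases ks' with
    | nil => simp [g] at h
    | cons k' l' =>
      simp only [g, List.cons.injEq, true_and] at h
      obtain ⟨h1, h2⟩ := rep_g_inj k k' ks l' h
      rw [h1, ih l' h2]

lemma g_surj : ∀ v : List Bool, ∃ ks, ks ≠ [] ∧ g ks = false :: v ++ [true] := by
  intro v
  induction v with
  | nil => exact ⟨[0], by simp, by simp [g]⟩
  | cons b v ih =>
    obtain ⟨ks, hne, hg⟩ := ih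
    cases b with
    | false =>
      exact ⟨0 :: ks, by simp, by simp [g, hg]⟩
    | true =>
      cases ks with
      | nil => exact absurd rfl hne
      | cons k l =>
        refine ⟨(k + 1) :: l, by simp, ?_⟩
        have h2 : List.replicate k true ++ g l = v ++ [true] := by
          have hg2 : (false :: (List.replicate k true ++ g l) : List Bool)
              = false :: (v ++ [true]) := by simpa [g] using hg
          injection hg2
        simp [g, List.replicate_succ, h2]


/-! ### Mirror symmetry -/

def mirror : CTree → CTree
  | .leaf => .leaf
  | .node l r => .node (mirror r) (mirror l)

@[simp] lemma mirror_mirror (t : CTree) : mirror (mirror t) = t := by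
  induction t with
  | leaf => rfl
  | node l r ihl ihr => simp [mirror, ihl, ihr]

@[simp] lemma mirror_eq_leaf {t : CTree} : mirror t = CTree.leaf ↔ t = CTree.leaf := by
  cases t <;> simp [mirror]

@[simp] lemma isize_mirror (t : CTree) : isize (mirror t) = isize t := by
  induction t with
  | leaf => rfl
  | node l r ihl ihr => simp [mirror, isize, ihl, ihr]; omega

lemma extSeq_mirror : ∀ t : CTree, extSeq (mirror t) = ((extSeq t).reverse).map not := by
  intro t
  induction t with
  | leaf => rfl
  | node l r ihl ihr =>
    have hL : (if mirror r = CTree.leaf then [false] else extSeq (mirror r)) =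
        ((if r = CTree.leaf then [true] else extSeq r).reverse).map not := by
      by_cases hr : r = .leaf
      · simp [hr, mirror]
      · simp [hr, ihr]
    have hR : (if mirror l = CTree.leaf then [true] else extSeq (mirror l)) =
        ((if l = CTree.leaf then [false] else extSeq l).reverse).map not := by
      by_cases hl : l = .leaf
      · simp [hl, mirror]
      · simp [hl, ihl]
    simp only [mirror, extSeq]
    rw [hL, hR, List.reverse_append, List.map_append]

lemma cword_mirror (t : CTree) : cword (mirror t) = ((cword t).reverse).map not := by
  by_cases h : t = .leaf
  · subst h; simp [cword, extSeq, mirror]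
  · have h' : mirror t ≠ .leaf := by simpa using h
    have e1 : extSeq (mirror t) = false :: cword (mirror t) ++ [true] := extSeq_shape _ h'
    have e2 : extSeq (mirror t) = false :: ((cword t).reverse).map not ++ [true] := by
      rw [extSeq_mirror, extSeq_shape t h]
      simp
    rw [e2] at e1
    injection e1 with h1 h3
    have h4 := congrArg List.dropLast h3
    simpa [List.dropLast_concat] using h4.symm

def cmirror : Ctx → Ctx
  | .hole => .hole
  | .left c r => .right (mirror r) (cmirror c)
  | .right l c => .left (cmirror c) (mirror l)

lemma fill_cmirror : ∀ (K : Ctx) (t : CTree),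
    (cmirror K).fill (mirror t) = mirror (K.fill t) := by
  intro K
  induction K with
  | hole => intro t; rfl
  | left c r ih => intro t; simp [cmirror, Ctx.fill, mirror, ih]
  | right l c ih => intro t; simp [cmirror, Ctx.fill, mirror, ih]

lemma validRot_mirror {T T' : CTree} (h : ValidRot T T') :
    ValidRot (mirror T') (mirror T) := by
  obtain ⟨K, A, B, C, hB, h1, h2⟩ := h
  refine ⟨cmirror K, mirror C, mirror B, mirror A, by simpa using hB, ?_, ?_⟩
  · rw [h2, ← fill_cmirror]; rfl
  · rw [h1, ← fill_cmirror]; rfl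

lemma rotStep_of_validRot {T T' : CTree} (h : ValidRot T T') : RotStep T T' := by
  obtain ⟨K, A, B, C, _, h1, h2⟩ := h
  exact ⟨K, A, B, C, h1, h2⟩

lemma tamari_of_chain {T Tm : CTree} (h : Relation.ReflTransGen ValidRot T Tm) :
    TamariLe T Tm :=
  Relation.ReflTransGen.mono (p := RotStep) (fun _ _ => rotStep_of_validRot) T Tm h

lemma tamari_of_mirror_chain {a b : CTree} (h : Relation.ReflTransGen ValidRot a b) :
    TamariLe (mirror b) (mirror a) := by
  induction h with
  | refl => exact Relation.ReflTransGen.refl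
  | tail _ hstep ih =>
    exact Relation.ReflTransGen.head (rotStep_of_validRot (validRot_mirror hstep)) ih

lemma to_min (T : CTree) :
    ∃ Tn, TamariLe Tn T ∧ (∀ T', ¬ ValidRot T' Tn) ∧
      extSeq Tn = extSeq T ∧ isize Tn = isize T := by
  obtain ⟨M, hchain, hmax⟩ := to_max (mirror T)
  obtain ⟨hext, hiz⟩ := chain_pres hchain
  refine ⟨mirror M, ?_, ?_, ?_, ?_⟩
  · have := tamari_of_mirror_chain hchain
    simpa using this
  · intro T' hT'
    have := validRot_mirror hT'
    simp only [mirror_mirror] at this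
    exact hmax (mirror T') this
  · rw [extSeq_mirror, hext, extSeq_mirror]
    have hnn : (not ∘ not) = id := by funext x; simp
    simp [hnn]
  · rw [isize_mirror, hiz, isize_mirror]


/-! ### Main lemmas -/

lemma max_EU (n : ℕ) (hn : 0 < n) (v : List Bool) (hv : v.length = n - 1) :
    ∃! Tmx : CTree, isize Tmx = n ∧ cword Tmx = v ∧ ∀ T' : CTree, ¬ ValidRot Tmx T' := by
  obtain ⟨ks, hne, hg⟩ := g_surj v
  have hext : extSeq (tmaxL ks) = false :: v ++ [true] := by rw [extSeq_tmaxL hne, hg]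
  have hnl : tmaxL ks ≠ .leaf := by rw [ne_eq, tmaxL_eq_leaf]; exact hne
  have hcw : cword (tmaxL ks) = v := by
    have hsh := extSeq_shape (tmaxL ks) hnl
    rw [hext] at hsh
    injection hsh with _ h2
    have h3 := congrArg List.dropLast h2
    simpa [List.dropLast_concat] using h3.symm
  have hsz : isize (tmaxL ks) = n := by
    have hl := extSeq_length _ hnl
    rw [hext] at hl
    simp at hl
    omega
  refine ⟨tmaxL ks, ⟨hsz, hcw, noRot_of_recNoR (recNoR_tmaxL ks)⟩, ?_⟩
  rintro T ⟨h1, h2, h3⟩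
  have hTnl : T ≠ .leaf := isize_pos_ne_leaf (h1 ▸ hn)
  obtain ⟨ks', hks'⟩ := tmaxL_of T (recNoR_of_noRot T h3)
  have hne' : ks' ≠ [] := by
    rintro rfl
    exact hTnl (by rw [hks']; rfl)
  have hgg : g ks' = g ks := by
    rw [← extSeq_tmaxL hne', ← hks', extSeq_shape T hTnl, h2]
    exact hg.symm
  rw [hks', g_inj ks' ks hgg]

lemma min_EU (n : ℕ) (hn : 0 < n) (v : List Bool) (hv : v.length = n - 1) :
    ∃! Tmn : CTree, isize Tmn = n ∧ cword Tmn = v ∧ ∀ T' : CTree, ¬ ValidRot T' Tmn := by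
  obtain ⟨M, ⟨hM1, hM2, hM3⟩, hMu⟩ := max_EU n hn ((v.reverse).map not) (by simp [hv])
  have hnn : (not ∘ not) = id := by funext x; simp
  refine ⟨mirror M, ⟨by simp [hM1], ?_, ?_⟩, ?_⟩
  · rw [cword_mirror, hM2]
    simp [hnn, List.map_reverse]
  · intro T' hT'
    have := validRot_mirror hT'
    simp only [mirror_mirror] at this
    exact hM3 _ this
  · rintro y ⟨h1, h2, h3⟩
    have hy : mirror y = M := by
      apply hMu
      refine ⟨by simp [h1], by rw [cword_mirror, h2], ?_⟩
      intro T' hT'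
      have := validRot_mirror hT'
      simp only [mirror_mirror] at this
      exact h3 _ this
    rw [← hy, mirror_mirror]

end TamariAux


/-- **Proposition 10.** Among the complete binary trees with `n` internal vertices and
interior canopy `v` there is a unique one admitting no valid right rotation
(`T̄max(v)`) and a unique one admitting no valid left rotation (`T̄min(v)`); and every
complete binary tree `T̄` with interior canopy `v` satisfies
`T̄min(v) ≤ T̄ ≤ T̄max(v)` in the Tamari lattice. -/
theorem tmin_tmax (n : ℕ) (hn : 0 < n) (v : List Bool) (hv : v.length = n - 1) :
    (∃! Tmx : CTree,
      isize Tmx = n ∧ cword Tmx = v ∧ ∀ T' : CTree, ¬ ValidRot Tmx T') ∧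
    (∃! Tmn : CTree,
      isize Tmn = n ∧ cword Tmn = v ∧ ∀ T' : CTree, ¬ ValidRot T' Tmn) ∧
    (∀ T Tmn Tmx : CTree,
      isize T = n → cword T = v →
      isize Tmn = n → cword Tmn = v → (∀ T' : CTree, ¬ ValidRot T' Tmn) →
      isize Tmx = n → cword Tmx = v → (∀ T' : CTree, ¬ ValidRot Tmx T') →
      TamariLe Tmn T ∧ TamariLe T Tmx) := by
  refine ⟨max_EU n hn v hv, min_EU n hn v hv, ?_⟩
  intro T Tmn Tmx hT1 hT2 hn1 hn2 hn3 hx1 hx2 hx3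
  constructor
  · obtain ⟨Tn, hle, hnorot, hext, hiz⟩ := to_min T
    have h1 : isize Tn = n := by rw [hiz, hT1]
    have h2 : cword Tn = v := by
      have : cword Tn = cword T := by simp [cword, hext]
      rw [this, hT2]
    obtain ⟨m, _, hmu⟩ := min_EU n hn v hv
    have e : Tn = Tmn :=
      (hmu Tn ⟨h1, h2, hnorot⟩).trans (hmu Tmn ⟨hn1, hn2, hn3⟩).symm
    rw [← e]; exact hle
  · obtain ⟨Tm, hchain, hnorot⟩ := to_max T
    obtain ⟨hext, hiz⟩ := chain_pres hchain
    have h1 : isize Tm = n := by rw [hiz, hT1]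
    have h2 : cword Tm = v := by
      have : cword Tm = cword T := by simp [cword, hext]
      rw [this, hT2]
    obtain ⟨m, _, hmu⟩ := max_EU n hn v hv
    have e : Tm = Tmx :=
      (hmu Tm ⟨h1, h2, hnorot⟩).trans (hmu Tmx ⟨hx1, hx2, hx3⟩).symm
    rw [← e] at *
    exact tamari_of_chain hchain
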